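/- Let (V₀,W₀), (V₁,W₁), (V₂,W₂) be pairwise transverse flags in ℝ³. Then there exists g ∈ GL(3,ℝ) mapping (V₀,W₀) to (span(e₁), span{e₁,e₂}), mapping (V₁,W₁) to (span(e₃), span{e₂,e₃}), and mapping (V₂,W₂) to one of the following flags: (span(e₁−e₂+e₃), {v : v₁+(1+X)v₂+Xv₃ = 0}) for some X ∈ ℝ with X ∉ {0,−1}; or (span(e₁+e₃), {v : v₁+v₂−v₃ = 0}); or (span(e₁+e₂+e₃), span{e₁+e₃, e₂}); or (span(e₁+e₃), span{e₁+e₃, e₂}). -/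

import Mathlib

open Matrix Submodule

/-- A flag in `ℝ³`: a line contained in a plane. -/
def IsFlag (V W : Submodule ℝ (Fin 3 → ℝ)) : Prop :=
  Module.finrank ℝ V = 1 ∧ Module.finrank ℝ W = 2 ∧ V ≤ W

/-- Two flags `(V,W)` and `(V',W')` are transverse if `V ⊄ W'` and `V' ⊄ W`. -/
def TransverseFlags (V W V' W' : Submodule ℝ (Fin 3 → ℝ)) : Prop :=
  ¬ V ≤ W' ∧ ¬ V' ≤ W

/-- The plane `Q X = {v ∈ ℝ³ : v₁ + (1+X)v₂ + Xv₃ = 0}`. -/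
noncomputable def planeQ (X : ℝ) : Submodule ℝ (Fin 3 → ℝ) :=
  LinearMap.ker ((LinearMap.proj 0 : (Fin 3 → ℝ) →ₗ[ℝ] ℝ)
    + (1 + X) • LinearMap.proj 1 + X • LinearMap.proj 2)

/-- The plane `P = {v ∈ ℝ³ : v₁ + v₂ - v₃ = 0}`. -/
noncomputable def planeP : Submodule ℝ (Fin 3 → ℝ) :=
  LinearMap.ker ((LinearMap.proj 0 : (Fin 3 → ℝ) →ₗ[ℝ] ℝ)
    + LinearMap.proj 1 - LinearMap.proj 2)

/-! ### Auxiliary lemmas -/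

lemma exists_gl (b : Fin 3 → (Fin 3 → ℝ)) (hind : LinearIndependent ℝ b) :
    ∃ g : GL (Fin 3) ℝ, ∀ (x y z : ℝ),
      ((g : Matrix (Fin 3) (Fin 3) ℝ)).mulVecLin (x • b 0 + y • b 1 + z • b 2) = ![x,y,z] := by
  have hcard : Fintype.card (Fin 3) = Module.finrank ℝ (Fin 3 → ℝ) := by simp
  let B := basisOfLinearIndependentOfCardEqFinrank hind hcard
  have hB : ⇑B = b := coe_basisOfLinearIndependentOfCardEqFinrank hind hcard
  let E : (Fin 3 → ℝ) ≃ₗ[ℝ] (Fin 3 → ℝ) := B.equivFun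
  set G := (LinearMap.GeneralLinearGroup.generalLinearEquiv ℝ (Fin 3 → ℝ)).symm E with hG
  set g := Matrix.GeneralLinearGroup.toLin.symm G with hgdef
  have h1 : Matrix.GeneralLinearGroup.toLin g = G := MulEquiv.apply_symm_apply _ _
  have h2 : (G : (Fin 3 → ℝ) →ₗ[ℝ] (Fin 3 → ℝ)) = E := by
    have h4 := LinearMap.GeneralLinearGroup.generalLinearEquiv_to_linearMap (R := ℝ)
      (M := Fin 3 → ℝ) G
    rw [hG, MulEquiv.apply_symm_apply] at h4
    exact h4.symm.trans rfl
  have h3 : (↑g : Matrix (Fin 3) (Fin 3) ℝ).mulVecLin = (E : (Fin 3 → ℝ) →ₗ[ℝ] (Fin 3 → ℝ)) := by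
    rw [← Matrix.GeneralLinearGroup.coe_toLin g, h1, h2]
  refine ⟨g, fun x y z => ?_⟩
  rw [h3]
  have hE : ∀ i, E (b i) = fun j => if i = j then 1 else 0 := by
    intro i; rw [← hB]; exact funext fun j => B.equivFun_self i j
  simp only [LinearEquiv.coe_coe, map_add, LinearEquiv.map_smul, hE]
  funext j
  fin_cases j <;> norm_num [Fin.ext_iff]

lemma mem_planeQ {X : ℝ} {v : Fin 3 → ℝ} :
    v ∈ planeQ X ↔ v 0 + (1 + X) * v 1 + X * v 2 = 0 := by
  simp [planeQ, LinearMap.mem_ker, LinearMap.proj]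

lemma mem_planeP {v : Fin 3 → ℝ} : v ∈ planeP ↔ v 0 + v 1 - v 2 = 0 := by
  simp [planeP, LinearMap.mem_ker, LinearMap.proj]

lemma span_sm (k : ℝ) (hk : k ≠ 0) (v : Fin 3 → ℝ) :
    span ℝ {k • v} = span ℝ {v} :=
  span_singleton_smul_eq (isUnit_iff_ne_zero.mpr hk) v

lemma span_pair_sm (k l : ℝ) (hk : k ≠ 0) (hl : l ≠ 0) (x y : Fin 3 → ℝ) :
    span ℝ {k • x, l • y} = span ℝ {x, y} := by
  rw [span_insert, span_insert, span_sm k hk, span_sm l hl]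

lemma span_pair_sub_smul (k : ℝ) (x y : Fin 3 → ℝ) :
    span ℝ {x, y - k • x} = span ℝ {x, y} := by
  apply le_antisymm <;> rw [span_le, Set.insert_subset_iff, Set.singleton_subset_iff]
  · exact ⟨subset_span (Set.mem_insert _ _),
      sub_mem (subset_span (Set.mem_insert_of_mem _ rfl))
        (smul_mem _ _ (subset_span (Set.mem_insert _ _)))⟩
  · refine ⟨subset_span (Set.mem_insert _ _), ?_⟩
    have h1 : (y - k • x) ∈ span ℝ {x, y - k • x} := subset_span (Set.mem_insert_of_mem _ rfl)
    have h2 : x ∈ span ℝ {x, y - k • x} := subset_span (Set.mem_insert _ _)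
    simpa using add_mem h1 (smul_mem _ k h2)

lemma smul3 (x p q r : ℝ) : x • ![p, q, r] = ![x*p, x*q, x*r] := by
  funext j; fin_cases j <;> simp

lemma planeQ_span (b c e f : ℝ) (hb : b ≠ 0) (hc : c ≠ 0) (he : e ≠ 0) (hf : f ≠ 0)
    (hD : b*f - c*e ≠ 0) :
    span ℝ {![1,-1,1], ![0, -(e/b), f/c]} = planeQ ((c*e)/(b*f - c*e)) := by
  set X : ℝ := (c*e)/(b*f - c*e) with hX
  apply le_antisymm
  · rw [span_le, Set.insert_subset_iff, Set.singleton_subset_iff]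
    constructor
    · rw [SetLike.mem_coe, mem_planeQ]; norm_num [Matrix.cons_val_two, Matrix.vecHead, Matrix.vecTail]
    · rw [SetLike.mem_coe, mem_planeQ]; norm_num [hX, Matrix.cons_val_two, Matrix.vecHead, Matrix.vecTail]; field_simp; ring
  · intro v hv
    rw [mem_planeQ] at hv
    rw [mem_span_pair]
    refine ⟨v 0, (v 2 - v 0)*c/f, ?_⟩
    funext j
    fin_cases j
    · norm_num
    · rw [hX] at hv
      field_simp at hv
      norm_num
      field_simp
      linear_combination -hv
    · norm_num [Fin.ext_iff]
      have : v ⟨2, by norm_num⟩ = v 2 := rfl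
      rw [this]
      field_simp
      ring

lemma planeP_span (q : ℝ) (hq : q ≠ 0) :
    span ℝ {![1,0,1], ![0,q,q]} = planeP := by
  apply le_antisymm
  · rw [span_le, Set.insert_subset_iff, Set.singleton_subset_iff]
    constructor
    · rw [SetLike.mem_coe, mem_planeP]; norm_num [Matrix.cons_val_two, Matrix.vecHead, Matrix.vecTail]
    · rw [SetLike.mem_coe, mem_planeP]; norm_num [Matrix.cons_val_two, Matrix.vecHead, Matrix.vecTail]
  · intro v hv
    rw [mem_planeP] at hv
    rw [mem_span_pair]
    refine ⟨v 0, v 1 / q, ?_⟩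
    funext j
    fin_cases j
    · norm_num
    · norm_num; field_simp
    · norm_num [Fin.ext_iff]
      have : v ⟨2, by norm_num⟩ = v 2 := rfl
      rw [this, div_mul_cancel₀ _ hq]
      linarith [hv]

lemma span_case3 (q : ℝ) (hq : q ≠ 0) :
    span ℝ {![1,1,1], ![0,q,0]} = span ℝ {![1,0,1], ![0,1,0]} := by
  apply le_antisymm <;> rw [span_le, Set.insert_subset_iff, Set.singleton_subset_iff] <;>
    constructor <;> rw [SetLike.mem_coe, mem_span_pair]
  · exact ⟨1, 1, by funext j; fin_cases j <;> norm_num⟩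
  · exact ⟨0, q, by funext j; fin_cases j <;> norm_num⟩
  · exact ⟨1, -1/q, by funext j; fin_cases j <;> simp [hq]⟩
  · exact ⟨0, 1/q, by funext j; fin_cases j <;> simp [hq]⟩

lemma span_case4 (q : ℝ) (hq : q ≠ 0) :
    span ℝ {![1,0,1], ![0,q,0]} = span ℝ {![1,0,1], ![0,1,0]} := by
  have h1 : (![0,q,0] : Fin 3 → ℝ) = q • ![0,1,0] := by rw [smul3]; norm_num
  rw [h1, span_insert, span_sm q hq, ← span_insert]

lemma range_pair (x y : Fin 3 → ℝ) : Set.range ![x, y] = {x, y} :=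
  Matrix.range_cons_cons_empty x y _

lemma eq_span_singleton (V : Submodule ℝ (Fin 3 → ℝ)) (hV : Module.finrank ℝ V = 1) :
    ∃ v : Fin 3 → ℝ, v ≠ 0 ∧ V = span ℝ {v} := by
  have hne : V ≠ ⊥ := by
    intro h; rw [h, finrank_bot] at hV; norm_num at hV
  obtain ⟨v, hvV, hv0⟩ := Submodule.exists_mem_ne_zero_of_ne_bot hne
  refine ⟨v, hv0, ?_⟩
  have hle : span ℝ {v} ≤ V := by rwa [span_singleton_le_iff_mem]
  have h1 : Module.finrank ℝ (span ℝ {v}) = 1 := finrank_span_singleton hv0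
  exact (Submodule.eq_of_le_of_finrank_le hle (by rw [h1, hV])).symm

lemma eq_span_pair (W : Submodule ℝ (Fin 3 → ℝ)) (hW : Module.finrank ℝ W = 2)
    (x y : Fin 3 → ℝ) (hx : x ∈ W) (hy : y ∈ W)
    (hind : LinearIndependent ℝ ![x, y]) : W = span ℝ {x, y} := by
  have hle : span ℝ {x, y} ≤ W := by
    rw [span_le, Set.insert_subset_iff, Set.singleton_subset_iff]; exact ⟨hx, hy⟩
  have hfr : Module.finrank ℝ (span ℝ {x, y}) = 2 := by
    rw [← range_pair x y, finrank_span_eq_card hind]; simp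
  exact (Submodule.eq_of_le_of_finrank_le hle (by rw [hfr, hW])).symm

lemma indep3 (v0 u v1 : Fin 3 → ℝ) (hu : u ≠ 0) (h1 : ∀ a : ℝ, a • u ≠ v1)
    (h2 : v0 ∉ span ℝ {u, v1}) : LinearIndependent ℝ ![v0, u, v1] := by
  have hpair : LinearIndependent ℝ ![u, v1] := (LinearIndependent.pair_iff' hu).2 h1
  have h3 : (![v0, u, v1] : Fin 3 → Fin 3 → ℝ) = Fin.cons v0 ![u, v1] := by
    funext i; fin_cases i <;> rfl
  rw [h3, linearIndependent_fin_cons]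
  refine ⟨hpair, ?_⟩
  rwa [range_pair]

lemma indep3_smul (v0 u v1 : Fin 3 → ℝ) (hind : LinearIndependent ℝ ![v0, u, v1])
    (s t r : ℝ) (hs : s ≠ 0) (ht : t ≠ 0) (hr : r ≠ 0) :
    LinearIndependent ℝ ![s • v0, t • u, r • v1] := by
  have h := hind.units_smul ![Units.mk0 s hs, Units.mk0 t ht, Units.mk0 r hr]
  convert h using 1
  funext i; fin_cases i <;> rfl

theorem stmt10 (V₀ W₀ V₁ W₁ V₂ W₂ : Submodule ℝ (Fin 3 → ℝ))
    (hF0 : IsFlag V₀ W₀) (hF1 : IsFlag V₁ W₁) (hF2 : IsFlag V₂ W₂)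
    (h01 : TransverseFlags V₀ W₀ V₁ W₁)
    (h02 : TransverseFlags V₀ W₀ V₂ W₂)
    (h12 : TransverseFlags V₁ W₁ V₂ W₂) :
    ∃ g : GL (Fin 3) ℝ,
      Submodule.map ((g : Matrix (Fin 3) (Fin 3) ℝ)).mulVecLin V₀ = span ℝ {![1,0,0]} ∧
      Submodule.map ((g : Matrix (Fin 3) (Fin 3) ℝ)).mulVecLin W₀
        = span ℝ {![1,0,0], ![0,1,0]} ∧
      Submodule.map ((g : Matrix (Fin 3) (Fin 3) ℝ)).mulVecLin V₁ = span ℝ {![0,0,1]} ∧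
      Submodule.map ((g : Matrix (Fin 3) (Fin 3) ℝ)).mulVecLin W₁
        = span ℝ {![0,1,0], ![0,0,1]} ∧
      ((∃ X : ℝ, X ≠ 0 ∧ X ≠ -1 ∧
          Submodule.map ((g : Matrix (Fin 3) (Fin 3) ℝ)).mulVecLin V₂
            = span ℝ {![1,-1,1]} ∧
          Submodule.map ((g : Matrix (Fin 3) (Fin 3) ℝ)).mulVecLin W₂ = planeQ X) ∨
        (Submodule.map ((g : Matrix (Fin 3) (Fin 3) ℝ)).mulVecLin V₂
            = span ℝ {![1,0,1]} ∧
          Submodule.map ((g : Matrix (Fin 3) (Fin 3) ℝ)).mulVecLin W₂ = planeP) ∨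
        (Submodule.map ((g : Matrix (Fin 3) (Fin 3) ℝ)).mulVecLin V₂
            = span ℝ {![1,1,1]} ∧
          Submodule.map ((g : Matrix (Fin 3) (Fin 3) ℝ)).mulVecLin W₂
            = span ℝ {![1,0,1], ![0,1,0]}) ∨
        (Submodule.map ((g : Matrix (Fin 3) (Fin 3) ℝ)).mulVecLin V₂
            = span ℝ {![1,0,1]} ∧
          Submodule.map ((g : Matrix (Fin 3) (Fin 3) ℝ)).mulVecLin W₂
            = span ℝ {![1,0,1], ![0,1,0]})) := by
  obtain ⟨h0a, h0b, h0c⟩ := hF0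
  obtain ⟨h1a, h1b, h1c⟩ := hF1
  obtain ⟨h2a, h2b, h2c⟩ := hF2
  obtain ⟨hT01, hT10⟩ := h01
  obtain ⟨hT02, hT20⟩ := h02
  obtain ⟨hT12, hT21⟩ := h12
  obtain ⟨v0, hv0ne, hV0⟩ := eq_span_singleton V₀ h0a
  obtain ⟨v1, hv1ne, hV1⟩ := eq_span_singleton V₁ h1a
  obtain ⟨w, hwne, hV2⟩ := eq_span_singleton V₂ h2a
  -- a nonzero vector in W₀ ⊓ W₁
  have hWne : W₀ ⊓ W₁ ≠ ⊥ := by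
    intro h
    have h4 := Submodule.finrank_sup_add_finrank_inf_eq W₀ W₁
    rw [h, finrank_bot, h0b, h1b] at h4
    have h5 : Module.finrank ℝ ↥(W₀ ⊔ W₁) ≤ 3 := by
      have := Submodule.finrank_le (W₀ ⊔ W₁)
      simpa using this
    omega
  obtain ⟨u, huW, hune⟩ := Submodule.exists_mem_ne_zero_of_ne_bot hWne
  have huW0 : u ∈ W₀ := huW.1
  have huW1 : u ∈ W₁ := huW.2
  -- memberships and non-memberships
  have hv0V0 : v0 ∈ V₀ := by rw [hV0]; exact mem_span_singleton_self v0
  have hv1V1 : v1 ∈ V₁ := by rw [hV1]; exact mem_span_singleton_self v1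
  have hwV2 : w ∈ V₂ := by rw [hV2]; exact mem_span_singleton_self w
  have hv0W0 : v0 ∈ W₀ := h0c hv0V0
  have hv1W1 : v1 ∈ W₁ := h1c hv1V1
  have hwW2 : w ∈ W₂ := h2c hwV2
  have hv0nW1 : v0 ∉ W₁ := fun h =>
    hT01 (by rw [hV0]; exact (span_singleton_le_iff_mem _ _).2 h)
  have hv1nW0 : v1 ∉ W₀ := fun h =>
    hT10 (by rw [hV1]; exact (span_singleton_le_iff_mem _ _).2 h)
  have hwnW0 : w ∉ W₀ := fun h =>
    hT20 (by rw [hV2]; exact (span_singleton_le_iff_mem _ _).2 h)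
  have hwnW1 : w ∉ W₁ := fun h =>
    hT21 (by rw [hV2]; exact (span_singleton_le_iff_mem _ _).2 h)
  have hv0nW2 : v0 ∉ W₂ := fun h =>
    hT02 (by rw [hV0]; exact (span_singleton_le_iff_mem _ _).2 h)
  have hv1nW2 : v1 ∉ W₂ := fun h =>
    hT12 (by rw [hV1]; exact (span_singleton_le_iff_mem _ _).2 h)
  -- the basis (v0, u, v1)
  have hind : LinearIndependent ℝ ![v0, u, v1] := by
    apply indep3 _ _ _ hune
    · intro a ha
      exact hv1nW0 (ha ▸ smul_mem _ a huW0)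
    · intro hmem
      have hle : span ℝ {u, v1} ≤ W₁ := by
        rw [span_le, Set.insert_subset_iff, Set.singleton_subset_iff]
        exact ⟨huW1, hv1W1⟩
      exact hv0nW1 (hle hmem)
  have hW0 : W₀ = span ℝ {v0, u} := by
    apply eq_span_pair W₀ h0b v0 u hv0W0 huW0
    refine (LinearIndependent.pair_iff' hv0ne).2 fun a ha => ?_
    have ha0 : a ≠ 0 := by rintro rfl; rw [zero_smul] at ha; exact hune ha.symm
    exact hv0nW1 (by rw [← inv_smul_smul₀ ha0 v0, ha]; exact smul_mem _ _ huW1)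
  have hW1 : W₁ = span ℝ {u, v1} := by
    apply eq_span_pair W₁ h1b u v1 huW1 hv1W1
    exact (LinearIndependent.pair_iff' hune).2 fun a ha => hv1nW0 (ha ▸ smul_mem _ a huW0)
  -- a second spanning vector for W₂
  have hlt : V₂ < W₂ := lt_of_le_of_ne h2c (fun h => by rw [h, h2b] at h2a; norm_num at h2a)
  obtain ⟨w', hw'W2, hw'nV2⟩ := SetLike.exists_of_lt hlt
  have hW2 : W₂ = span ℝ {w, w'} := by
    apply eq_span_pair W₂ h2b w w' hwW2 hw'W2
    refine (LinearIndependent.pair_iff' hwne).2 fun a ha => ?_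
    exact hw'nV2 (by rw [hV2, ← ha]; exact smul_mem _ a (mem_span_singleton_self w))
  -- coordinates of w and w'
  have hcard : Fintype.card (Fin 3) = Module.finrank ℝ (Fin 3 → ℝ) := by simp
  set B0 := basisOfLinearIndependentOfCardEqFinrank hind hcard with hB0def
  have hB0 : ⇑B0 = ![v0, u, v1] := coe_basisOfLinearIndependentOfCardEqFinrank hind hcard
  have hexp : ∀ v : Fin 3 → ℝ,
      v = (B0.equivFun v 0) • v0 + (B0.equivFun v 1) • u + (B0.equivFun v 2) • v1 := by
    intro v
    have h6 := B0.sum_equivFun v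
    rw [Fin.sum_univ_three, hB0] at h6
    simpa using h6.symm
  set a := B0.equivFun w 0 with hadef
  set b := B0.equivFun w 1 with hbdef
  set c := B0.equivFun w 2 with hcdef
  have hw_exp : w = a • v0 + b • u + c • v1 := hexp w
  have ha : a ≠ 0 := by
    intro h
    apply hwnW1
    rw [hw_exp, h, zero_smul, zero_add]
    exact add_mem (smul_mem _ _ huW1) (smul_mem _ _ hv1W1)
  have hc : c ≠ 0 := by
    intro h
    apply hwnW0
    rw [hw_exp, h, zero_smul, add_zero]
    exact add_mem (smul_mem _ _ hv0W0) (smul_mem _ _ huW0)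
  set k := B0.equivFun w' 0 / a with hkdef
  set w'' := w' - k • w with hw''def
  set e := B0.equivFun w' 1 - k * b with hedef
  set f := B0.equivFun w' 2 - k * c with hfdef
  have hw''_exp : w'' = e • u + f • v1 := by
    have h7 : B0.equivFun w' 0 = k * a := by
      rw [hkdef, div_mul_cancel₀ _ ha]
    rw [hw''def, hexp w', hw_exp, h7, hedef, hfdef]
    module
  have hw''W2 : w'' ∈ W₂ := by
    rw [hw''def]
    exact sub_mem hw'W2 (smul_mem _ _ hwW2)
  have hw''ne : w'' ≠ 0 := by
    intro h
    apply hw'nV2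
    have : w' = k • w := by
      have := sub_eq_zero.mp (hw''def ▸ h)
      exact this
    rw [hV2, this]
    exact smul_mem _ k (mem_span_singleton_self w)
  have hW2' : W₂ = span ℝ {w, w''} := by
    rw [hW2, ← span_pair_sub_smul k w w', ← hw''def]
  have he : e ≠ 0 := by
    intro h
    have hf0 : f ≠ 0 := by
      intro h8
      apply hw''ne
      rw [hw''_exp, h, h8, zero_smul, zero_smul, add_zero]
    apply hv1nW2
    have : v1 = f⁻¹ • w'' := by
      rw [hw''_exp, h, zero_smul, zero_add, smul_smul, inv_mul_cancel₀ hf0, one_smul]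
    rw [this]
    exact smul_mem _ _ hw''W2
  have hbf : b * f - c * e ≠ 0 := by
    intro h
    apply hv0nW2
    have h9 : e • w - b • w'' = (e * a) • v0 := by
      rw [hw_exp, hw''_exp]
      match_scalars
      · ring
      · ring
      · linear_combination -h
    have hea : e * a ≠ 0 := mul_ne_zero he ha
    have : v0 = (e * a)⁻¹ • (e • w - b • w'') := by
      rw [h9, smul_smul, inv_mul_cancel₀ hea, one_smul]
    rw [this]
    exact smul_mem _ _ (sub_mem (smul_mem _ _ hwW2) (smul_mem _ _ hw''W2))
  -- the common construction, for an arbitrary nonzero scaling `t` of `u`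
  have main : ∀ t : ℝ, t ≠ 0 → ∃ g : GL (Fin 3) ℝ,
      Submodule.map ((g : Matrix (Fin 3) (Fin 3) ℝ)).mulVecLin V₀ = span ℝ {![1,0,0]} ∧
      Submodule.map ((g : Matrix (Fin 3) (Fin 3) ℝ)).mulVecLin W₀
        = span ℝ {![1,0,0], ![0,1,0]} ∧
      Submodule.map ((g : Matrix (Fin 3) (Fin 3) ℝ)).mulVecLin V₁ = span ℝ {![0,0,1]} ∧
      Submodule.map ((g : Matrix (Fin 3) (Fin 3) ℝ)).mulVecLin W₁
        = span ℝ {![0,1,0], ![0,0,1]} ∧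
      Submodule.map ((g : Matrix (Fin 3) (Fin 3) ℝ)).mulVecLin V₂
        = span ℝ {![1, b/t, 1]} ∧
      Submodule.map ((g : Matrix (Fin 3) (Fin 3) ℝ)).mulVecLin W₂
        = span ℝ {![1, b/t, 1], ![0, e/t, f/c]} := by
    intro t ht
    obtain ⟨g, hg⟩ := exists_gl ![a • v0, t • u, c • v1] (indep3_smul v0 u v1 hind a t c ha ht hc)
    have hg' : ∀ x y z : ℝ,
        ((g : Matrix (Fin 3) (Fin 3) ℝ)).mulVecLin (x • (a • v0) + y • (t • u) + z • (c • v1))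
          = ![x,y,z] := fun x y z => hg x y z
    have hval0 : ((g : Matrix (Fin 3) (Fin 3) ℝ)).mulVecLin v0 = ![a⁻¹, 0, 0] := by
      rw [← hg' a⁻¹ 0 0]
      congr 1
      match_scalars <;> field_simp <;> ring
    have hvalu : ((g : Matrix (Fin 3) (Fin 3) ℝ)).mulVecLin u = ![0, t⁻¹, 0] := by
      rw [← hg' 0 t⁻¹ 0]
      congr 1
      match_scalars <;> field_simp <;> ring
    have hval1 : ((g : Matrix (Fin 3) (Fin 3) ℝ)).mulVecLin v1 = ![0, 0, c⁻¹] := by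
      rw [← hg' 0 0 c⁻¹]
      congr 1
      match_scalars <;> field_simp <;> ring
    have hvalw : ((g : Matrix (Fin 3) (Fin 3) ℝ)).mulVecLin w = ![1, b/t, 1] := by
      rw [← hg' 1 (b/t) 1]
      congr 1
      rw [hw_exp]
      match_scalars <;> field_simp <;> ring
    have hvalw'' : ((g : Matrix (Fin 3) (Fin 3) ℝ)).mulVecLin w'' = ![0, e/t, f/c] := by
      rw [← hg' 0 (e/t) (f/c)]
      congr 1
      rw [hw''_exp]
      match_scalars <;> field_simp <;> ring
    refine ⟨g, ?_, ?_, ?_, ?_, ?_, ?_⟩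
    · rw [hV0, Submodule.map_span, Set.image_singleton, hval0]
      have h10 : (![a⁻¹,0,0] : Fin 3 → ℝ) = a⁻¹ • ![1,0,0] := by rw [smul3]; norm_num
      rw [h10, span_sm _ (inv_ne_zero ha)]
    · rw [hW0, Submodule.map_span, Set.image_pair, hval0, hvalu]
      have h10 : (![a⁻¹,0,0] : Fin 3 → ℝ) = a⁻¹ • ![1,0,0] := by rw [smul3]; norm_num
      have h11 : (![0,t⁻¹,0] : Fin 3 → ℝ) = t⁻¹ • ![0,1,0] := by rw [smul3]; norm_num
      rw [h10, h11, span_pair_sm _ _ (inv_ne_zero ha) (inv_ne_zero ht)]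
    · rw [hV1, Submodule.map_span, Set.image_singleton, hval1]
      have h10 : (![0,0,c⁻¹] : Fin 3 → ℝ) = c⁻¹ • ![0,0,1] := by rw [smul3]; norm_num
      rw [h10, span_sm _ (inv_ne_zero hc)]
    · rw [hW1, Submodule.map_span, Set.image_pair, hvalu, hval1]
      have h11 : (![0,t⁻¹,0] : Fin 3 → ℝ) = t⁻¹ • ![0,1,0] := by rw [smul3]; norm_num
      have h10 : (![0,0,c⁻¹] : Fin 3 → ℝ) = c⁻¹ • ![0,0,1] := by rw [smul3]; norm_num
      rw [h11, h10, span_pair_sm _ _ (inv_ne_zero ht) (inv_ne_zero hc)]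
    · rw [hV2, Submodule.map_span, Set.image_singleton, hvalw]
    · rw [hW2', Submodule.map_span, Set.image_pair, hvalw, hvalw'']
  -- case analysis
  by_cases hb : b = 0 <;> by_cases hf : f = 0
  · -- b = 0, f = 0 : fourth normal form
    obtain ⟨g, hg1, hg2, hg3, hg4, hg5, hg6⟩ := main 1 one_ne_zero
    refine ⟨g, hg1, hg2, hg3, hg4, Or.inr (Or.inr (Or.inr ⟨?_, ?_⟩))⟩
    · rw [hg5, hb]; norm_num
    · rw [hg6, hb, hf]
      have h12 : (![1, (0:ℝ)/1, 1] : Fin 3 → ℝ) = ![1,0,1] := by norm_num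
      have h13 : (![0, e/1, (0:ℝ)/c] : Fin 3 → ℝ) = ![0,e,0] := by norm_num
      rw [h12, h13, span_case4 e he]
  · -- b = 0, f ≠ 0 : planeP
    have ht : c * e / f ≠ 0 := div_ne_zero (mul_ne_zero hc he) hf
    obtain ⟨g, hg1, hg2, hg3, hg4, hg5, hg6⟩ := main (c * e / f) ht
    refine ⟨g, hg1, hg2, hg3, hg4, Or.inr (Or.inl ⟨?_, ?_⟩)⟩
    · rw [hg5, hb]; norm_num
    · rw [hg6, hb]
      have h12 : (![1, (0:ℝ)/(c*e/f), 1] : Fin 3 → ℝ) = ![1,0,1] := by norm_num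
      have h13 : e / (c * e / f) = f / c := by field_simp
      rw [h12, h13, planeP_span (f/c) (div_ne_zero hf hc)]
  · -- b ≠ 0, f = 0 : third normal form
    obtain ⟨g, hg1, hg2, hg3, hg4, hg5, hg6⟩ := main b hb
    refine ⟨g, hg1, hg2, hg3, hg4, Or.inr (Or.inr (Or.inl ⟨?_, ?_⟩))⟩
    · rw [hg5, div_self hb]
    · rw [hg6, div_self hb, hf]
      have h13 : (![0, e/b, (0:ℝ)/c] : Fin 3 → ℝ) = ![0, e/b, 0] := by norm_num
      rw [h13, span_case3 (e/b) (div_ne_zero he hb)]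
  · -- b ≠ 0, f ≠ 0 : planeQ
    have hnb : (-b) ≠ 0 := neg_ne_zero.2 hb
    obtain ⟨g, hg1, hg2, hg3, hg4, hg5, hg6⟩ := main (-b) hnb
    have hX0 : c * e / (b * f - c * e) ≠ 0 := div_ne_zero (mul_ne_zero hc he) hbf
    have hX1 : c * e / (b * f - c * e) ≠ -1 := by
      intro h
      rw [div_eq_iff hbf] at h
      have : b * f = 0 := by linear_combination h
      exact (mul_ne_zero hb hf) this
    have hdivb : b / (-b) = -1 := by field_simp
    have hdive : e / (-b) = -(e/b) := by field_simp
    refine ⟨g, hg1, hg2, hg3, hg4,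
      Or.inl ⟨c * e / (b * f - c * e), hX0, hX1, ?_, ?_⟩⟩
    · rw [hg5, hdivb]
    · rw [hg6, hdivb, hdive, planeQ_span b c e f hb hc he hf hbf]
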